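/- With the above notation, r_A·(√(l²+1) − √(m̄²+1) − √(n̄²+1) + l − m̄ − n̄ + 1)/(2l) = r·cosh²(σ_A − α_A). -/

import Mathlib

set_option maxHeartbeats 1000000

open Real

theorem malfatti_radius_a1
    (a b c : ℝ) (ha : 0 < a) (hb : 0 < b) (hc : 0 < c)
    (habc : a < b + c) (hbca : b < c + a) (hcab : c < a + b)
    (s r rA rC αA βA γA σA l mb nb : ℝ)
    (hs : s = (a + b + c) / 2)
    (hr : r = Real.sqrt ((s - a) * (s - b) * (s - c) / s))
    (hrA : rA = Real.sqrt (s * (s - b) * (s - c) / (s - a)))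
    (hrC : rC = Real.sqrt (s * (s - a) * (s - b) / (s - c)))
    (hαA : 0 < αA) (hβA : 0 < βA) (hγA : 0 < γA)
    (hsinhα : Real.sinh αA ^ 2 = a / (s - a))
    (hsinhβ : Real.sinh βA ^ 2 = (s - c) / (s - a))
    (hsinhγ : Real.sinh γA ^ 2 = (s - b) / (s - a))
    (hσA : σA = (αA + βA + γA) / 2)
    (hl : l = s / rA) (hm : mb = (s - c) / rA) (hn : nb = (s - b) / rA) :
    rA * (Real.sqrt (l ^ 2 + 1) - Real.sqrt (mb ^ 2 + 1) - Real.sqrt (nb ^ 2 + 1) + l - mb - nb + 1) / (2 * l) = r * Real.cosh (σA - αA) ^ 2 := by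
  have hx : 0 < s - a := by rw [hs]; linarith
  have hy : 0 < s - b := by rw [hs]; linarith
  have hz : 0 < s - c := by rw [hs]; linarith
  have hspos : 0 < s := by rw [hs]; linarith
  set X := Real.sqrt (s - a) with hXdef
  set Y := Real.sqrt (s - b) with hYdef
  set Z := Real.sqrt (s - c) with hZdef
  set A := Real.sqrt a with hAdef
  set B := Real.sqrt b with hBdef
  set C := Real.sqrt c with hCdef
  set u := Real.sqrt s with hudef
  have hX2 : X ^ 2 = s - a := Real.sq_sqrt hx.le
  have hY2 : Y ^ 2 = s - b := Real.sq_sqrt hy.le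
  have hZ2 : Z ^ 2 = s - c := Real.sq_sqrt hz.le
  have hA2 : A ^ 2 = a := Real.sq_sqrt ha.le
  have hB2 : B ^ 2 = b := Real.sq_sqrt hb.le
  have hC2 : C ^ 2 = c := Real.sq_sqrt hc.le
  have hu2 : u ^ 2 = s := Real.sq_sqrt hspos.le
  have hXp : 0 < X := Real.sqrt_pos.2 hx
  have hYp : 0 < Y := Real.sqrt_pos.2 hy
  have hZp : 0 < Z := Real.sqrt_pos.2 hz
  have hAp : 0 < A := Real.sqrt_pos.2 ha
  have hBp : 0 < B := Real.sqrt_pos.2 hb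
  have hCp : 0 < C := Real.sqrt_pos.2 hc
  have hup : 0 < u := Real.sqrt_pos.2 hspos
  have hX0 := hXp.ne'
  have hY0 := hYp.ne'
  have hZ0 := hZp.ne'
  have hu0 := hup.ne'
  -- key quadratic relations
  have e0 : u ^ 2 = X ^ 2 + Y ^ 2 + Z ^ 2 := by rw [hu2, hX2, hY2, hZ2, hs]; ring
  have e1 : B ^ 2 * C ^ 2 = u ^ 2 * X ^ 2 + Y ^ 2 * Z ^ 2 := by
    rw [hu2, hX2, hY2, hZ2, hB2, hC2, hs]; ring
  have e2 : C ^ 2 * A ^ 2 = X ^ 2 * Z ^ 2 + u ^ 2 * Y ^ 2 := by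
    rw [hu2, hX2, hY2, hZ2, hC2, hA2, hs]; ring
  have e3 : A ^ 2 * B ^ 2 = X ^ 2 * Y ^ 2 + u ^ 2 * Z ^ 2 := by
    rw [hu2, hX2, hY2, hZ2, hA2, hB2, hs]; ring
  -- values of r and rA
  have hrA' : rA = u * Y * Z / X := by
    rw [hrA, show s * (s - b) * (s - c) / (s - a) = (u * Y * Z / X) ^ 2 by
      rw [← hX2, ← hY2, ← hZ2, ← hu2]; field_simp]
    exact Real.sqrt_sq (by positivity)
  have hr' : r = X * Y * Z / u := by
    rw [hr, show (s - a) * (s - b) * (s - c) / s = (X * Y * Z / u) ^ 2 by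
      rw [← hX2, ← hY2, ← hZ2, ← hu2]; field_simp]
    exact Real.sqrt_sq (by positivity)
  have hrAp : 0 < rA := by rw [hrA']; positivity
  have hl' : l = u * X / (Y * Z) := by
    rw [hl, hrA', ← hu2]; field_simp
  have hm' : mb = X * Z / (u * Y) := by
    rw [hm, hrA', ← hZ2]; field_simp
  have hn' : nb = X * Y / (u * Z) := by
    rw [hn, hrA', ← hY2]; field_simp
  -- sqrt simplifications
  have hsq1 : Real.sqrt (l ^ 2 + 1) = B * C / (Y * Z) := by
    rw [show l ^ 2 + 1 = (B * C / (Y * Z)) ^ 2 by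
      rw [hl']; field_simp; linear_combination -e1]
    exact Real.sqrt_sq (by positivity)
  have hsq2 : Real.sqrt (mb ^ 2 + 1) = C * A / (u * Y) := by
    rw [show mb ^ 2 + 1 = (C * A / (u * Y)) ^ 2 by
      rw [hm']; field_simp; linear_combination -e2]
    exact Real.sqrt_sq (by positivity)
  have hsq3 : Real.sqrt (nb ^ 2 + 1) = A * B / (u * Z) := by
    rw [show nb ^ 2 + 1 = (A * B / (u * Z)) ^ 2 by
      rw [hn']; field_simp; linear_combination -e3]
    exact Real.sqrt_sq (by positivity)
  -- hyperbolic values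
  have hsina : Real.sinh αA = A / X := by
    have h1 : Real.sinh αA = Real.sqrt (a / (s - a)) := by
      rw [← hsinhα, Real.sqrt_sq (Real.sinh_pos_iff.2 hαA).le]
    rw [h1, Real.sqrt_div ha.le]
  have hsinb : Real.sinh βA = Z / X := by
    have h1 : Real.sinh βA = Real.sqrt ((s - c) / (s - a)) := by
      rw [← hsinhβ, Real.sqrt_sq (Real.sinh_pos_iff.2 hβA).le]
    rw [h1, Real.sqrt_div hz.le]
  have hsing : Real.sinh γA = Y / X := by
    have h1 : Real.sinh γA = Real.sqrt ((s - b) / (s - a)) := by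
      rw [← hsinhγ, Real.sqrt_sq (Real.sinh_pos_iff.2 hγA).le]
    rw [h1, Real.sqrt_div hy.le]
  have hcosa : Real.cosh αA = u / X := by
    have h1 : Real.cosh αA ^ 2 = (u / X) ^ 2 := by
      rw [Real.cosh_sq, hsinhα]; field_simp
      linear_combination s * hX2 - (s - a) * hu2
    have h2 := congrArg Real.sqrt h1
    rwa [Real.sqrt_sq (Real.cosh_pos αA).le, Real.sqrt_sq (by positivity)] at h2
  have hcosb : Real.cosh βA = B / X := by
    have h1 : Real.cosh βA ^ 2 = (B / X) ^ 2 := by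
      rw [Real.cosh_sq, hsinhβ]; field_simp
      linear_combination (2*s - a - c) * hX2 - (s - a) * hB2 + 2 * (s - a) * hs
    have h2 := congrArg Real.sqrt h1
    rwa [Real.sqrt_sq (Real.cosh_pos βA).le, Real.sqrt_sq (by positivity)] at h2
  have hcosg : Real.cosh γA = C / X := by
    have h1 : Real.cosh γA ^ 2 = (C / X) ^ 2 := by
      rw [Real.cosh_sq, hsinhγ]; field_simp
      linear_combination (2*s - a - b) * hX2 - (s - a) * hC2 + 2 * (s - a) * hs
    have h2 := congrArg Real.sqrt h1
    rwa [Real.sqrt_sq (Real.cosh_pos γA).le, Real.sqrt_sq (by positivity)] at h2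
  have hdouble : Real.cosh (σA - αA) ^ 2 = (Real.cosh (βA + γA - αA) + 1) / 2 := by
    have h2 : βA + γA - αA = 2 * (σA - αA) := by rw [hσA]; ring
    rw [h2, Real.cosh_two_mul, Real.sinh_sq]; ring
  have hexp : Real.cosh (βA + γA - αA) =
      ((B * C + Z * Y) * u - (Z * C + B * Y) * A) / (X ^ 2 * X) := by
    have h3 : βA + γA - αA = (βA + γA) - αA := by ring
    rw [h3, Real.cosh_sub, Real.cosh_add, Real.sinh_add, hsina, hsinb, hsing,
      hcosa, hcosb, hcosg]
    field_simp
  rw [hsq1, hsq2, hsq3, hl', hm', hn', hrA', hr', hdouble, hexp]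
  field_simp
  linear_combination X * e0
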